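/- Let Q ∈ [0,1) be a real number and n a natural number. Then ∏_{j=0}^{n−1} (1 − Q·e^{−j})^{−1} ≤ (1 − Q)^{−e/(e−1)}, where e is Euler's number and the right-hand side is the real power (1−Q)^{−e/(e−1)}. -/
import Mathlib

open Real

/-- For `0 ≤ Q < 1`,
`∏_{j=0}^{n-1} (1 - Q e^{-j})⁻¹ ≤ (1 - Q)^{-e/(e-1)}` (real power). -/
theorem prod_inv_one_sub_le_rpow
    (Q : ℝ) (hQ0 : 0 ≤ Q) (hQ1 : Q < 1) (n : ℕ) :
    ∏ j ∈ Finset.range n, (1 - Q * Real.exp (-(j : ℝ)))⁻¹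
      ≤ (1 - Q) ^ (-(Real.exp 1 / (Real.exp 1 - 1))) := by
  have h1Q : (0:ℝ) < 1 - Q := by linarith
  have he1 : (1:ℝ) < Real.exp 1 := by
    have := Real.add_one_le_exp 1; linarith [Real.exp_one_gt_d9]
  -- each factor bound
  have hexp : ∀ j : ℕ, 0 < Real.exp (-(j:ℝ)) ∧ Real.exp (-(j:ℝ)) ≤ 1 := by
    intro j
    refine ⟨Real.exp_pos _, Real.exp_le_one_iff.mpr (neg_nonpos.mpr (Nat.cast_nonneg j))⟩
  have hfac : ∀ j : ℕ, (1 - Q) ^ (Real.exp (-(j:ℝ))) ≤ 1 - Q * Real.exp (-(j:ℝ)) := by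
    intro j
    have := rpow_one_add_le_one_add_mul_self (s := -Q) (by linarith)
      (hexp j).1.le (hexp j).2
    calc (1 - Q) ^ (Real.exp (-(j:ℝ))) = (1 + -Q) ^ (Real.exp (-(j:ℝ))) := by ring_nf
      _ ≤ 1 + Real.exp (-(j:ℝ)) * -Q := this
      _ = 1 - Q * Real.exp (-(j:ℝ)) := by ring
  have hpos : ∀ j : ℕ, 0 < 1 - Q * Real.exp (-(j:ℝ)) := by
    intro j
    have : Q * Real.exp (-(j:ℝ)) ≤ Q * 1 := by
      exact mul_le_mul_of_nonneg_left (hexp j).2 hQ0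
    nlinarith
  calc ∏ j ∈ Finset.range n, (1 - Q * Real.exp (-(j:ℝ)))⁻¹
      ≤ ∏ j ∈ Finset.range n, ((1 - Q) ^ (Real.exp (-(j:ℝ))))⁻¹ := by
        refine Finset.prod_le_prod (fun j _ => inv_nonneg.mpr (hpos j).le) (fun j _ => ?_)
        exact inv_anti₀ (Real.rpow_pos_of_pos h1Q _) (hfac j)
    _ = ∏ j ∈ Finset.range n, (1 - Q) ^ (-(Real.exp (-(j:ℝ)))) := by
        refine Finset.prod_congr rfl fun j _ => ?_
        exact (Real.rpow_neg h1Q.le _).symm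
    _ = (1 - Q) ^ (∑ j ∈ Finset.range n, -(Real.exp (-(j:ℝ)))) := by
        rw [Real.rpow_sum_of_pos h1Q]
    _ ≤ (1 - Q) ^ (-(Real.exp 1 / (Real.exp 1 - 1))) := by
        apply Real.rpow_le_rpow_of_exponent_ge h1Q (by linarith)
        rw [Finset.sum_neg_distrib, neg_le_neg_iff]
        have hsum : ∑ j ∈ Finset.range n, Real.exp (-(j:ℝ))
            = ∑ j ∈ Finset.range n, (Real.exp 1)⁻¹ ^ j := by
          refine Finset.sum_congr rfl fun j _ => ?_
          rw [← Real.exp_neg, ← Real.exp_nat_mul]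
          norm_num
        rw [hsum]
        have hr0 : (0:ℝ) ≤ (Real.exp 1)⁻¹ := by positivity
        have hr1 : (Real.exp 1)⁻¹ < 1 := by
          rw [inv_lt_one_iff₀]; right; exact he1
        calc ∑ j ∈ Finset.range n, (Real.exp 1)⁻¹ ^ j
            ≤ ∑' j : ℕ, (Real.exp 1)⁻¹ ^ j :=
              Summable.sum_le_tsum _ (fun j _ => by positivity)
                (summable_geometric_of_lt_one hr0 hr1)
          _ = (1 - (Real.exp 1)⁻¹)⁻¹ := tsum_geometric_of_lt_one hr0 hr1
          _ = Real.exp 1 / (Real.exp 1 - 1) := by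
              field_simp
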